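/- Let $\phi$ be a harmonic $\mathrm{Spin}^c$-spinor on an $n$-dimensional Riemannian $\mathrm{Spin}^c$-manifold, i.e. $\mathcal{D}_A \phi = 0$ for the Dirac operator $\mathcal{D}_A$ associated to a Hermitian connection $A$ on the determinant line bundle. Then at every point where $\phi \ne 0$, the refined Kato inequality $|\nabla |\phi||^2 \le \frac{n-1}{n} |\nabla^A \phi|^2$ holds. -/

import Mathlib

open scoped RealInnerProductSpace

/-- refined Kato inequality, pointwise form. Let `φ` be a harmonic
`Spin^c`-spinor on an `n`-dimensional Riemannian `Spin^c`-manifold. At a point where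
`φ ≠ 0` one has `|∇|φ||² ≤ (n-1)/n |∇^A φ|²`.  Here `E` is the spinor fiber at the
point, `c i` is Clifford multiplication by the `i`-th vector of an orthonormal frame
(satisfying the Clifford relations and skew-adjointness), `v i = ∇^A_{e_i} φ` is the
covariant derivative, the Dirac equation reads `∑ i, c i (v i) = 0`, and
`∂_i |φ| = ⟪v i, φ⟫ / ‖φ‖`, so `|∇|φ||² = ∑ i (⟪v i, φ⟫/‖φ‖)²`. -/
theorem stmt2 {E : Type*} [NormedAddCommGroup E] [InnerProductSpace ℝ E]
    (n : ℕ) (hn : 0 < n)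
    (c : Fin n → E →ₗ[ℝ] E)
    -- Clifford relations
    (hCliff : ∀ i j, c i ∘ₗ c j + c j ∘ₗ c i =
      if i = j then (-2 : ℝ) • LinearMap.id else 0)
    -- skew-adjointness of Clifford multiplication
    (hSkew : ∀ i (u w : E), ⟪c i u, w⟫ = -⟪u, c i w⟫)
    (φ : E) (hφ : φ ≠ 0)
    (v : Fin n → E)
    -- the Dirac equation `𝒟_A φ = 0`
    (hDirac : ∑ i, c i (v i) = 0) :
    ∑ i, (⟪v i, φ⟫ / ‖φ‖) ^ 2 ≤ ((n : ℝ) - 1) / n * ∑ i, ‖v i‖ ^ 2 := by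
  set r : ℝ := ‖φ‖ with hr_def
  have hr : 0 < r := norm_pos_iff.mpr hφ
  have hr2 : (0:ℝ) < r ^ 2 := by positivity
  have hn1 : (1:ℝ) ≤ n := by exact_mod_cast hn
  have hnpos : (0:ℝ) < n := by exact_mod_cast hn
  have hsq : ∀ i (w : E), c i (c i w) = -w := by
    intro i w
    have h := LinearMap.congr_fun (hCliff i i) w
    simp only [if_pos rfl, LinearMap.add_apply, LinearMap.comp_apply,
      LinearMap.smul_apply, LinearMap.id_apply] at h
    have h2 : (2 : ℝ) • c i (c i w) = (2 : ℝ) • (-w) := by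
      rw [two_smul]; rw [h]; simp [smul_smul]
    exact smul_right_injective E two_ne_zero h2
  have hiso : ∀ i (u w : E), ⟪c i u, c i w⟫ = ⟪u, w⟫ := by
    intro i u w
    rw [hSkew i u (c i w), hsq i w, inner_neg_right, neg_neg]
  have hanti : ∀ i j, i ≠ j → ∀ w : E, c i (c j w) = - c j (c i w) := by
    intro i j hij w
    have h := LinearMap.congr_fun (hCliff i j) w
    simp only [if_neg hij, LinearMap.add_apply, LinearMap.comp_apply,
      LinearMap.zero_apply] at h
    exact eq_neg_of_add_eq_zero_left h
  have hcc : ∀ j k : Fin n, ⟪c j φ, c k φ⟫ = if j = k then r ^ 2 else 0 := by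
    intro j k
    by_cases hjk : j = k
    · subst hjk
      rw [if_pos rfl, hiso, real_inner_self_eq_norm_sq]
    · rw [if_neg hjk]
      have h1 : ⟪c j φ, c k φ⟫ = -⟪φ, c j (c k φ)⟫ := hSkew j φ (c k φ)
      have h2 : ⟪c j φ, c k φ⟫ = ⟪φ, c j (c k φ)⟫ := by
        rw [real_inner_comm, hSkew k φ (c j φ), hanti j k hjk φ, inner_neg_right]
      linarith
  set β : Fin n → ℝ := fun i => ⟪v i, φ⟫ with hβ
  set T : ℝ := ∑ i, (β i) ^ 2 with hT
  set Q : ℝ := ∑ i, ‖v i‖ ^ 2 with hQ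
  have hT0 : 0 ≤ T := Finset.sum_nonneg fun i _ => sq_nonneg _
  have hQ0 : 0 ≤ Q := Finset.sum_nonneg fun i _ => sq_nonneg _
  set ψ : E := ∑ j, β j • c j φ with hψ_def
  have hφφ : ⟪(φ : E), φ⟫ = r ^ 2 := real_inner_self_eq_norm_sq φ
  have hψψ : ⟪ψ, ψ⟫ = T * r ^ 2 := by
    rw [hψ_def, sum_inner]
    have key : ∀ j : Fin n, ⟪β j • c j φ, ∑ k, β k • c k φ⟫ = β j ^ 2 * r ^ 2 := by
      intro j
      rw [inner_sum]
      have eq1 : ∀ k ∈ Finset.univ, ⟪β j • c j φ, β k • c k φ⟫ =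
          if j = k then β j ^ 2 * r ^ 2 else 0 := by
        intro k _
        rw [real_inner_smul_left, real_inner_smul_right, hcc j k]
        by_cases hjk : j = k
        · subst hjk; simp [sq]; ring
        · simp [hjk]
      rw [Finset.sum_congr rfl eq1]
      simp
    rw [Finset.sum_congr rfl fun j _ => key j, hT, Finset.sum_mul]
  have hcψφ : ∀ i, ⟪c i ψ, φ⟫ = -(β i * r ^ 2) := by
    intro i
    rw [hSkew i ψ φ, hψ_def, sum_inner]
    have eq1 : ∀ j ∈ Finset.univ, ⟪β j • c j φ, c i φ⟫ =
        if j = i then β i * r ^ 2 else 0 := by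
      intro j _
      rw [real_inner_smul_left, hcc j i]
      by_cases hji : j = i
      · subst hji; simp
      · simp [hji]
    rw [Finset.sum_congr rfl eq1]
    simp
  have hcψcψ : ∀ i, ⟪c i ψ, c i ψ⟫ = T * r ^ 2 := fun i => by rw [hiso, hψψ]
  set Ψ : PiLp 2 (fun _ : Fin n => E) := WithLp.toLp 2 (fun i => c i ψ + β i • φ) with hΨ_def
  set V : PiLp 2 (fun _ : Fin n => E) := WithLp.toLp 2 (fun i => v i - (β i / r ^ 2) • φ) with hV_def
  have hΨφ : ∀ i, ⟪Ψ i, φ⟫ = 0 := by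
    intro i
    show ⟪c i ψ + β i • φ, φ⟫ = 0
    rw [inner_add_left, real_inner_smul_left, hcψφ i, hφφ]
    ring
  have hΨΨ : ⟪Ψ, Ψ⟫ = ((n : ℝ) - 1) * T * r ^ 2 := by
    rw [PiLp.inner_apply]
    have key : ∀ i : Fin n, ⟪Ψ i, Ψ i⟫ = (T - β i ^ 2) * r ^ 2 := by
      intro i
      have h1 : ⟪(φ : E), c i ψ⟫ = -(β i * r ^ 2) := by
        rw [real_inner_comm]; exact hcψφ i
      show ⟪c i ψ + β i • φ, c i ψ + β i • φ⟫ = _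
      rw [inner_add_add_self, hcψcψ i, real_inner_smul_right, hcψφ i,
        real_inner_smul_left, h1, real_inner_smul_left, real_inner_smul_right, hφφ]
      ring
    rw [Finset.sum_congr rfl fun i _ => key i, ← Finset.sum_mul,
      Finset.sum_sub_distrib, Finset.sum_const, Finset.card_univ,
      Fintype.card_fin, nsmul_eq_mul, ← hT]
    ring
  have hVV : ⟪V, V⟫ = Q - T / r ^ 2 := by
    rw [PiLp.inner_apply]
    have key : ∀ i : Fin n, ⟪V i, V i⟫ = ‖v i‖ ^ 2 - β i ^ 2 / r ^ 2 := by
      intro i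
      have e1 : ⟪v i, (β i / r ^ 2) • φ⟫ = β i / r ^ 2 * β i := by
        rw [real_inner_smul_right]
      have e2 : ⟪(β i / r ^ 2) • φ, v i⟫ = β i / r ^ 2 * β i := by
        rw [real_inner_smul_left, real_inner_comm]
      have e3 : ⟪(β i / r ^ 2) • φ, (β i / r ^ 2) • φ⟫
          = β i / r ^ 2 * (β i / r ^ 2 * r ^ 2) := by
        rw [real_inner_smul_left, real_inner_smul_right, hφφ]
      show ⟪v i - (β i / r ^ 2) • φ, v i - (β i / r ^ 2) • φ⟫ = _
      rw [inner_sub_sub_self, e1, e2, e3, real_inner_self_eq_norm_sq]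
      field_simp
      ring
    rw [Finset.sum_congr rfl fun i _ => key i, Finset.sum_sub_distrib,
      ← Finset.sum_div, ← hT, ← hQ]
  have hVΨ : ⟪V, Ψ⟫ = T := by
    rw [PiLp.inner_apply]
    have key : ∀ i : Fin n, ⟪V i, Ψ i⟫ = -⟪c i (v i), ψ⟫ + β i ^ 2 := by
      intro i
      have h2 : ⟪(φ : E), Ψ i⟫ = 0 := by rw [real_inner_comm]; exact hΨφ i
      have h3 : ⟪v i, c i ψ⟫ = -⟪c i (v i), ψ⟫ := by
        have := hSkew i (v i) ψ; linarith
      show ⟪v i - (β i / r ^ 2) • φ, Ψ i⟫ = _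
      rw [inner_sub_left, real_inner_smul_left, h2]
      show ⟪v i, c i ψ + β i • φ⟫ - β i / r ^ 2 * 0 = _
      rw [inner_add_right, real_inner_smul_right, h3]
      show -⟪c i (v i), ψ⟫ + β i * β i - β i / r ^ 2 * 0
        = -⟪c i (v i), ψ⟫ + β i ^ 2
      ring
    rw [Finset.sum_congr rfl fun i _ => key i, Finset.sum_add_distrib,
      Finset.sum_neg_distrib, ← sum_inner, hDirac, inner_zero_left, ← hT]
    ring
  have cs := real_inner_mul_inner_self_le V Ψ
  rw [hVΨ, hVV, hΨΨ] at cs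
  have cs' : T * T ≤ ((n : ℝ) - 1) * T * (Q * r ^ 2 - T) := by
    have hexp : (Q - T / r ^ 2) * (((n:ℝ) - 1) * T * r ^ 2)
        = ((n : ℝ) - 1) * T * (Q * r ^ 2 - T) := by
      field_simp
    linarith [cs, hexp.le, hexp.symm.le]
  have hgoal_lhs : ∑ i, (β i / r) ^ 2 = T / r ^ 2 := by
    rw [hT, Finset.sum_div]
    exact Finset.sum_congr rfl fun i _ => by rw [div_pow]
  rw [hgoal_lhs, div_le_iff₀ hr2, div_mul_eq_mul_div, div_mul_eq_mul_div,
    le_div_iff₀ hnpos]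
  rcases eq_or_lt_of_le hT0 with h0 | hTpos
  · rw [← h0]
    have : (0:ℝ) ≤ ((n:ℝ) - 1) * Q * r ^ 2 := by
      apply mul_nonneg (mul_nonneg (by linarith) hQ0) hr2.le
    linarith
  · nlinarith [cs', hTpos]
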